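/- A slice regular function whose twistor lift lies on the non-normal cubic X₀X₃² + X₁²X₂ = 0: define f₁ : ℍ∖ℝ → ℍ by f₁(α + Iβ) = −(α + Iβ)²·(1 − I·i)/2 + (α + Iβ)·(1 + I·i)/2 for β > 0, I ∈ 𝕊. Then f₁ is a slice regular function, and for every u in the real span of {1, i}, with I = (1 + u·j)⁻¹·i·(1 + u·j) and v = α + iβ (β > 0), one has the identity (1 + u·j)·f₁(α + Iβ) = −v² + (u·v)·j; in particular the lifted point with homogeneous coordinates (X₀, X₁, X₂, X₃) = (1, u, −v², u·v) satisfies X₀·X₃² + X₁²·X₂ = 0. -/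

import Mathlib

/-- The quaternion imaginary unit `i`. -/
noncomputable def qi : Quaternion ℝ := ⟨0, 1, 0, 0⟩

/-- The quaternion imaginary unit `j`. -/
noncomputable def qj : Quaternion ℝ := ⟨0, 0, 1, 0⟩

/- Identify ℍ with `Quaternion ℝ`.  A function `f : ℍ∖ℝ → ℍ` is slice regular if
it is the slice function of a stem function `(F₁, F₂)` on `ℂ∖ℝ` whose components
are real-differentiable and satisfy the Cauchy-Riemann system. -/

noncomputable def stemQ (a b d e g a' b' d' e' g' : ℝ) : ℂ → Quaternion ℝ := fun w =>
  (a*w.re + b*w.im + d*(w.re*w.re) + e*(w.re*w.im) + g*(w.im*w.im)) • (1:Quaternion ℝ)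
  + (a'*w.re + b'*w.im + d'*(w.re*w.re) + e'*(w.re*w.im) + g'*(w.im*w.im)) • qi

lemma quadDeriv (a b d e g : ℝ) (z : ℂ) :
    HasFDerivAt (fun w : ℂ => a*w.re + b*w.im + d*(w.re*w.re) + e*(w.re*w.im) + g*(w.im*w.im))
      ((a + 2*d*z.re + e*z.im) • Complex.reCLM + (b + e*z.re + 2*g*z.im) • Complex.imCLM) z := by
  have hre : HasFDerivAt (fun w : ℂ => w.re) Complex.reCLM z := Complex.reCLM.hasFDerivAt
  have him : HasFDerivAt (fun w : ℂ => w.im) Complex.imCLM z := Complex.imCLM.hasFDerivAt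
  have h := ((((hre.const_mul a).add (him.const_mul b)).add
      ((hre.mul hre).const_mul d)).add ((hre.mul him).const_mul e)).add
      ((him.mul him).const_mul g)
  refine h.congr_fderiv (ContinuousLinearMap.ext fun w => ?_)
  simp
  ring

noncomputable def stemD (a b d e g a' b' d' e' g' : ℝ) (z : ℂ) : ℂ →L[ℝ] Quaternion ℝ :=
  ((a + 2*d*z.re + e*z.im) • Complex.reCLM
    + (b + e*z.re + 2*g*z.im) • Complex.imCLM).smulRight (1:Quaternion ℝ)
  + ((a' + 2*d'*z.re + e'*z.im) • Complex.reCLM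
    + (b' + e'*z.re + 2*g'*z.im) • Complex.imCLM).smulRight qi

lemma stemQDeriv (a b d e g a' b' d' e' g' : ℝ) (z : ℂ) :
    HasFDerivAt (stemQ a b d e g a' b' d' e' g') (stemD a b d e g a' b' d' e' g' z) z :=
  ((quadDeriv a b d e g z).smul_const (1:Quaternion ℝ)).add
    ((quadDeriv a' b' d' e' g' z).smul_const qi)

lemma stemD_apply (a b d e g a' b' d' e' g' : ℝ) (z w : ℂ) :
    stemD a b d e g a' b' d' e' g' z w
      = ((a + 2*d*z.re + e*z.im)*w.re + (b + e*z.re + 2*g*z.im)*w.im) • (1:Quaternion ℝ)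
      + ((a' + 2*d'*z.re + e'*z.im)*w.re + (b' + e'*z.re + 2*g'*z.im)*w.im) • qi := by
  simp [stemD, add_smul]
  module

lemma keyalg (α β : ℝ) (I : Quaternion ℝ) (hI : I * I = -1) :
    (2 : ℝ)⁻¹ • (-(((α : Quaternion ℝ) + I * (β : Quaternion ℝ)) ^ 2) * (1 - I * qi))
      + (2 : ℝ)⁻¹ • (((α : Quaternion ℝ) + I * (β : Quaternion ℝ)) * (1 + I * qi))
    = (((2:ℝ)⁻¹*(α - α*α + β*β)) • (1:Quaternion ℝ) + ((2:ℝ)⁻¹*(-(2*α*β) - β)) • qi)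
      + I * (((2:ℝ)⁻¹*(β - 2*α*β)) • (1:Quaternion ℝ) + ((2:ℝ)⁻¹*(α*α - β*β + α)) • qi) := by
  rw [Quaternion.ext_iff] at hI
  simp [Quaternion.re_one, Quaternion.imI_one, Quaternion.imJ_one, Quaternion.imK_one] at hI
  obtain ⟨h1,h2,h3,h4⟩ := hI
  rw [Quaternion.ext_iff]
  simp [pow_two, Quaternion.re_one, Quaternion.imI_one, Quaternion.imJ_one, Quaternion.imK_one]
  simp [qi]
  generalize I.re = a at *
  generalize I.imI = b at *
  generalize I.imJ = c at *
  generalize I.imK = d at *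
  have hb2 : a*b = 0 := by linarith
  have hc2 : a*c = 0 := by linarith
  have hd2 : a*d = 0 := by linarith
  rcases eq_or_ne a 0 with ha | ha
  · subst ha
    have hs : b*b + c*c + d*d = 1 := by nlinarith [h1]
    refine ⟨?_, ?_, ?_, ?_⟩ <;> ring_nf
    · linear_combination (β^2/2)*(b+1) * hs
    · linear_combination (-(α*β) - β/2) * hs
    · linear_combination (-(β^2*d/2)) * hs
    · linear_combination (β^2*c/2) * hs
  · exfalso
    have hb := (mul_eq_zero.mp hb2).resolve_left ha
    have hc := (mul_eq_zero.mp hc2).resolve_left ha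
    have hd := (mul_eq_zero.mp hd2).resolve_left ha
    subst hb; subst hc; subst hd
    nlinarith [h1]

noncomputable def stP  : ℂ → Quaternion ℝ := stemQ 2⁻¹ 0 (-2⁻¹) 0 2⁻¹  0 (-2⁻¹) 0 (-1) 0
noncomputable def stP' : ℂ → Quaternion ℝ := stemQ 2⁻¹ 0 (-2⁻¹) 0 2⁻¹  0 2⁻¹ 0 1 0
noncomputable def stQ  : ℂ → Quaternion ℝ := stemQ 0 2⁻¹ 0 (-1) 0      2⁻¹ 0 2⁻¹ 0 (-2⁻¹)
noncomputable def stQ' : ℂ → Quaternion ℝ := stemQ 0 2⁻¹ 0 (-1) 0      (-2⁻¹) 0 (-2⁻¹) 0 2⁻¹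


set_option maxHeartbeats 1600000

/-- **A slice regular function whose twistor lift lies on the non-normal cubic
`X₀X₃² + X₁²X₂ = 0`**: the function
`f₁(α + Iβ) = -(α + Iβ)²(1 - I·i)/2 + (α + Iβ)(1 + I·i)/2` is slice regular, its
lift satisfies `(1 + u·j)·f₁(α + Iβ) = -v² + (u·v)·j`
(`I = (1 + u·j)⁻¹·i·(1 + u·j)`, `v = α + iβ`), and the lifted point
`(1, u, -v², u·v)` satisfies `X₀·X₃² + X₁²·X₂ = 0`. -/
theorem slice_regular_on_nonnormal_cubic_one
    (f₁ : Quaternion ℝ → Quaternion ℝ)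
    (hf₁ : ∀ (α β : ℝ), 0 < β → ∀ I : Quaternion ℝ, I ^ 2 = -1 →
      f₁ ((α : Quaternion ℝ) + I * (β : Quaternion ℝ))
        = (2 : ℝ)⁻¹ • (-(((α : Quaternion ℝ) + I * (β : Quaternion ℝ)) ^ 2)
              * (1 - I * qi))
          + (2 : ℝ)⁻¹ • (((α : Quaternion ℝ) + I * (β : Quaternion ℝ))
              * (1 + I * qi))) :
    (∃ F₁ F₂ : ℂ → Quaternion ℝ,
      (∀ z : ℂ, z.im ≠ 0 →
        F₁ ((starRingEnd ℂ) z) = F₁ z ∧ F₂ ((starRingEnd ℂ) z) = - F₂ z) ∧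
      (∀ z : ℂ, z.im ≠ 0 → ∀ I : Quaternion ℝ, I ^ 2 = -1 →
        f₁ ((z.re : Quaternion ℝ) + I * (z.im : Quaternion ℝ)) = F₁ z + I * F₂ z) ∧
      (∀ z : ℂ, z.im ≠ 0 → ∃ D₁ D₂ : ℂ →L[ℝ] Quaternion ℝ,
        HasFDerivAt F₁ D₁ z ∧ HasFDerivAt F₂ D₂ z ∧
        D₁ 1 = D₂ Complex.I ∧ D₁ Complex.I = - D₂ 1))
    ∧
    (∀ u ∈ Submodule.span ℝ ({1, qi} : Set (Quaternion ℝ)),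
      ∀ z : ℂ, 0 < z.im →
        (1 + u * qj) *
            f₁ ((z.re : Quaternion ℝ)
                + ((1 + u * qj)⁻¹ * qi * (1 + u * qj)) * (z.im : Quaternion ℝ))
          = -(((z.re : Quaternion ℝ) + qi * (z.im : Quaternion ℝ)) ^ 2)
            + (u * ((z.re : Quaternion ℝ) + qi * (z.im : Quaternion ℝ))) * qj ∧
        (u * ((z.re : Quaternion ℝ) + qi * (z.im : Quaternion ℝ))) ^ 2
          + u ^ 2 * (-(((z.re : Quaternion ℝ) + qi * (z.im : Quaternion ℝ)) ^ 2))
          = 0) := by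
  constructor
  ·   refine ⟨fun z => if 0 < z.im then stP z else stP' z,
              fun z => if 0 < z.im then stQ z else stQ' z, ?_, ?_, ?_⟩
      · intro z hz
        rcases hz.lt_or_gt with hneg | hpos
        · have h1 : 0 < ((starRingEnd ℂ) z).im := by simp [Complex.conj_im]; linarith
          have h2 : ¬ 0 < z.im := by linarith
          simp only [if_pos h1, if_neg h2]
          constructor
          · show stP _ = stP' z
            simp only [stP, stP', stemQ, Complex.conj_re, Complex.conj_im]
            module
          · show stQ _ = - stQ' z
            simp only [stQ, stQ', stemQ, Complex.conj_re, Complex.conj_im]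
            module
        · have h1 : ¬ 0 < ((starRingEnd ℂ) z).im := by simp [Complex.conj_im]; linarith
          simp only [if_neg h1, if_pos hpos]
          constructor
          · show stP' _ = stP z
            simp only [stP, stP', stemQ, Complex.conj_re, Complex.conj_im]
            module
          · show stQ' _ = - stQ z
            simp only [stQ, stQ', stemQ, Complex.conj_re, Complex.conj_im]
            module
      · intro z hz I hI
        rcases hz.lt_or_gt with hneg | hpos
        · have h2 : ¬ 0 < z.im := by linarith
          simp only [if_neg h2]
          rw [show ((z.im : ℝ) : Quaternion ℝ) = -(((-z.im : ℝ)) : Quaternion ℝ) by push_cast; rw [neg_neg],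
            show I * -(((-z.im : ℝ)) : Quaternion ℝ) = (-I) * (((-z.im : ℝ)) : Quaternion ℝ) by
              rw [neg_mul, mul_neg],
            hf₁ z.re (-z.im) (by linarith) (-I) (by rw [neg_sq]; exact hI),
            keyalg z.re (-z.im) (-I) (by rw [neg_mul_neg]; rwa [pow_two] at hI)]
          have hA : (((2:ℝ)⁻¹*(z.re - z.re*z.re + (-z.im)*(-z.im))) • (1:Quaternion ℝ)
              + ((2:ℝ)⁻¹*(-(2*z.re*(-z.im)) - (-z.im))) • qi) = stP' z := by
            simp only [stP', stemQ]; module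
          have hB : (((2:ℝ)⁻¹*((-z.im) - 2*z.re*(-z.im))) • (1:Quaternion ℝ)
              + ((2:ℝ)⁻¹*(z.re*z.re - (-z.im)*(-z.im) + z.re)) • qi) = -(stQ' z) := by
            simp only [stQ', stemQ]; module
          rw [hA, hB, mul_neg, neg_mul, neg_neg]
        · simp only [if_pos hpos]
          rw [hf₁ z.re z.im hpos I hI,
            keyalg z.re z.im I (by rwa [pow_two] at hI)]
          have hA : (((2:ℝ)⁻¹*(z.re - z.re*z.re + z.im*z.im)) • (1:Quaternion ℝ)
              + ((2:ℝ)⁻¹*(-(2*z.re*z.im) - z.im)) • qi) = stP z := by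
            simp only [stP, stemQ]; module
          have hB : (((2:ℝ)⁻¹*(z.im - 2*z.re*z.im)) • (1:Quaternion ℝ)
              + ((2:ℝ)⁻¹*(z.re*z.re - z.im*z.im + z.re)) • qi) = stQ z := by
            simp only [stQ, stemQ]; module
          rw [hA, hB]
      · intro z hz
        rcases hz.lt_or_gt with hneg | hpos
        · have hmem : {w : ℂ | w.im < 0} ∈ nhds z :=
            (isOpen_lt Complex.continuous_im continuous_const).mem_nhds hneg
          have he1 : (fun w => if 0 < w.im then stP w else stP' w) =ᶠ[nhds z] stP' :=
            Filter.eventuallyEq_of_mem hmem (fun w hw => if_neg (by simp at hw ⊢; linarith))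
          have he2 : (fun w => if 0 < w.im then stQ w else stQ' w) =ᶠ[nhds z] stQ' :=
            Filter.eventuallyEq_of_mem hmem (fun w hw => if_neg (by simp at hw ⊢; linarith))
          refine ⟨stemD 2⁻¹ 0 (-2⁻¹) 0 2⁻¹ 0 2⁻¹ 0 1 0 z,
                  stemD 0 2⁻¹ 0 (-1) 0 (-2⁻¹) 0 (-2⁻¹) 0 2⁻¹ z,
            (stemQDeriv _ _ _ _ _ _ _ _ _ _ z).congr_of_eventuallyEq he1,
            (stemQDeriv _ _ _ _ _ _ _ _ _ _ z).congr_of_eventuallyEq he2, ?_, ?_⟩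
          · rw [stemD_apply, stemD_apply]
            simp
            try module
          · rw [stemD_apply, stemD_apply]
            simp
            try rw [← neg_add]
            try module
        · have hmem : {w : ℂ | 0 < w.im} ∈ nhds z :=
            (isOpen_lt continuous_const Complex.continuous_im).mem_nhds hpos
          have he1 : (fun w => if 0 < w.im then stP w else stP' w) =ᶠ[nhds z] stP :=
            Filter.eventuallyEq_of_mem hmem (fun w hw => if_pos hw)
          have he2 : (fun w => if 0 < w.im then stQ w else stQ' w) =ᶠ[nhds z] stQ :=
            Filter.eventuallyEq_of_mem hmem (fun w hw => if_pos hw)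
          refine ⟨stemD 2⁻¹ 0 (-2⁻¹) 0 2⁻¹ 0 (-2⁻¹) 0 (-1) 0 z,
                  stemD 0 2⁻¹ 0 (-1) 0 2⁻¹ 0 2⁻¹ 0 (-2⁻¹) z,
            (stemQDeriv _ _ _ _ _ _ _ _ _ _ z).congr_of_eventuallyEq he1,
            (stemQDeriv _ _ _ _ _ _ _ _ _ _ z).congr_of_eventuallyEq he2, ?_, ?_⟩
          · rw [stemD_apply, stemD_apply]
            simp
            try module
          · rw [stemD_apply, stemD_apply]
            simp
            try rw [← neg_add]
            try module
  · intro u hu z hz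
    rw [Submodule.mem_span_pair] at hu
    obtain ⟨s, t, hu⟩ := hu
    have huv : u * ((z.re : Quaternion ℝ) + qi * (z.im : Quaternion ℝ))
        = ((z.re : Quaternion ℝ) + qi * (z.im : Quaternion ℝ)) * u := by
      rw [← hu]; ext <;> simp [Quaternion.re_one, Quaternion.imI_one, Quaternion.imJ_one, Quaternion.imK_one] <;> simp [qi] <;> ring
    refine ⟨?_, by rw [Commute.mul_pow huv 2, mul_neg, add_neg_cancel]⟩
    set v : Quaternion ℝ := (z.re : Quaternion ℝ) + qi * (z.im : Quaternion ℝ) with hv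
    set c : Quaternion ℝ := 1 + u * qj with hcdef
    set I : Quaternion ℝ := c⁻¹ * qi * c with hIdef
    have hc : c ≠ 0 := by
      intro h
      have := congrArg QuaternionAlgebra.re h
      simp [hcdef, ← hu, Quaternion.re_one, Quaternion.imI_one, Quaternion.imJ_one, Quaternion.imK_one, Quaternion.re_zero] at this
      simp [qi, qj] at this
    have hcI : c * I = qi * c := by
      rw [hIdef, ← mul_assoc, ← mul_assoc, mul_inv_cancel₀ hc, one_mul]
    have hii : qi * qi = -1 := by ext <;> simp [Quaternion.re_one, Quaternion.imI_one, Quaternion.imJ_one, Quaternion.imK_one] <;> simp [qi]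
    have hI2 : I ^ 2 = -1 := by
      rw [pow_two, hIdef,
        show c⁻¹ * qi * c * (c⁻¹ * qi * c) = c⁻¹ * (qi * ((c * c⁻¹) * (qi * c))) by
          simp [mul_assoc],
        mul_inv_cancel₀ hc, one_mul, show qi * (qi * c) = qi * qi * c by rw [mul_assoc],
        hii, neg_one_mul, mul_neg, inv_mul_cancel₀ hc]
    have hq : c * ((z.re : Quaternion ℝ) + I * (z.im : Quaternion ℝ)) = v * c := by
      calc c * ((z.re : Quaternion ℝ) + I * (z.im : Quaternion ℝ))
          = c * (z.re : Quaternion ℝ) + (c * I) * (z.im : Quaternion ℝ) := by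
            rw [mul_add, ← mul_assoc]
        _ = (z.re : Quaternion ℝ) * c + qi * ((z.im : Quaternion ℝ) * c) := by
            rw [(Quaternion.coe_commutes z.re c).symm, hcI, mul_assoc,
              (Quaternion.coe_commutes z.im c).symm]
        _ = v * c := by rw [hv, add_mul, mul_assoc]
    have hX : c - qi * c * qi = ((2:ℝ) : Quaternion ℝ) := by
      rw [hcdef, ← hu]; ext <;> simp [Quaternion.re_one, Quaternion.imI_one, Quaternion.imJ_one, Quaternion.imK_one] <;> simp [qi, qj] <;> ring
    have hY : c + qi * c * qi = ((2:ℝ) : Quaternion ℝ) * (u * qj) := by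
      rw [hcdef, ← hu]; ext <;> simp [Quaternion.re_one, Quaternion.imI_one, Quaternion.imJ_one, Quaternion.imK_one] <;> simp [qi, qj] <;> ring
    have hciq : c * (I * qi) = qi * c * qi := by rw [← mul_assoc, hcI]
    have hZ2 : c * (1 - I * qi) = ((2:ℝ) : Quaternion ℝ) := by
      rw [mul_sub, mul_one, hciq, hX]
    have hZ3 : c * (1 + I * qi) = ((2:ℝ) : Quaternion ℝ) * (u * qj) := by
      rw [mul_add, mul_one, hciq, hY]
    have hq2 : c * (((z.re : Quaternion ℝ) + I * (z.im : Quaternion ℝ)) *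
        ((z.re : Quaternion ℝ) + I * (z.im : Quaternion ℝ))) = v * (v * c) := by
      rw [← mul_assoc, hq, mul_assoc, hq]
    rw [hf₁ z.re z.im hz I hI2, mul_add, mul_smul_comm, mul_smul_comm]
    have e1 : c * (-(((z.re : Quaternion ℝ) + I * (z.im : Quaternion ℝ)) ^ 2) * (1 - I * qi))
        = -(v * (v * ((2:ℝ) : Quaternion ℝ))) := by
      calc c * (-(((z.re : Quaternion ℝ) + I * (z.im : Quaternion ℝ)) ^ 2) * (1 - I * qi))
          = -(c * (((z.re : Quaternion ℝ) + I * (z.im : Quaternion ℝ)) *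
              ((z.re : Quaternion ℝ) + I * (z.im : Quaternion ℝ))) * (1 - I * qi)) := by
            rw [pow_two, neg_mul, mul_neg, ← mul_assoc c]
        _ = -((v * (v * c)) * (1 - I * qi)) := by rw [hq2]
        _ = -(v * (v * (c * (1 - I * qi)))) := by rw [mul_assoc, mul_assoc]
        _ = -(v * (v * ((2:ℝ) : Quaternion ℝ))) := by rw [hZ2]
    have e2 : c * (((z.re : Quaternion ℝ) + I * (z.im : Quaternion ℝ)) * (1 + I * qi))
        = v * (((2:ℝ) : Quaternion ℝ) * (u * qj)) := by
      calc c * (((z.re : Quaternion ℝ) + I * (z.im : Quaternion ℝ)) * (1 + I * qi))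
          = (c * ((z.re : Quaternion ℝ) + I * (z.im : Quaternion ℝ))) * (1 + I * qi) :=
            (mul_assoc _ _ _).symm
        _ = v * (c * (1 + I * qi)) := by rw [hq, mul_assoc]
        _ = v * (((2:ℝ) : Quaternion ℝ) * (u * qj)) := by rw [hZ3]
    rw [e1, e2]
    have s1 : (2:ℝ)⁻¹ • (-(v * (v * ((2:ℝ) : Quaternion ℝ)))) = -(v*v) := by
      rw [Quaternion.mul_coe_eq_smul, mul_smul_comm, smul_neg, smul_smul]
      norm_num
    have s2 : (2:ℝ)⁻¹ • (v * (((2:ℝ) : Quaternion ℝ) * (u * qj))) = v * (u * qj) := by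
      rw [Quaternion.coe_mul_eq_smul, mul_smul_comm, smul_smul]
      norm_num
    rw [s1, s2, pow_two, ← mul_assoc, ← huv, mul_assoc]
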